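/- If the deletion weight satisfies γ ≤ δ (in particular when insertion/deletion are allowed) and the target language is prefix-closed, then the edit distance to the target language is contractible whenever min{α, β, γ} ≤ δ: for all words w and letters a, the weighted edit distance from w to P(L) is at most the weighted edit distance from w ++ [a] to P(L). As a concrete special case: with all weights equal (unweighted Levenshtein-Damerau distance), the edit distance d(w) from w to a prefix-closed language satisfies d(w) ≤ d(w ++ [a]) for all w and a. -/

import Mathlib

open scoped ENNReal

/-- A single edit operation, with its cost: substitution (α), insertion (β),
deletion (γ), transposition of adjacent letters (δ). -/
inductive EditStep {V : Type*} (α β γ δ : ℝ≥0∞) : List V → List V → ℝ≥0∞ → Prop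
  | subst (u v : List V) (a b : V) : EditStep α β γ δ (u ++ a :: v) (u ++ b :: v) α
  | insert (u v : List V) (a : V) : EditStep α β γ δ (u ++ v) (u ++ a :: v) β
  | delete (u v : List V) (a : V) : EditStep α β γ δ (u ++ a :: v) (u ++ v) γ
  | transpose (u v : List V) (a b : V) :
      EditStep α β γ δ (u ++ a :: b :: v) (u ++ b :: a :: v) δ

/-- A finite sequence of edit operations, with its total cost. -/
inductive Edits {V : Type*} (α β γ δ : ℝ≥0∞) : List V → List V → ℝ≥0∞ → Prop
  | refl (w : List V) : Edits α β γ δ w w 0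
  | step {w₁ w₂ w₃ : List V} {c c' : ℝ≥0∞} :
      EditStep α β γ δ w₁ w₂ c → Edits α β γ δ w₂ w₃ c' → Edits α β γ δ w₁ w₃ (c + c')

/-- Weighted edit distance from a word to a language: the infimum of the total
cost of edit sequences transforming the word into a member of the language
(`∞` if there is no such sequence). -/
noncomputable def editDist {V : Type*} (α β γ δ : ℝ≥0∞) (L : Set (List V))
    (w : List V) : ℝ≥0∞ :=
  sInf {c | ∃ w' ∈ L, Edits α β γ δ w w' c}

def pclose {V : Type*} (L : Set (List V)) : Set (List V) := {w | ∃ u, w ++ u ∈ L}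

def prefixClosed {V : Type*} (L : Set (List V)) : Prop :=
  ∀ w ∈ L, ∀ u : List V, u <+: w → u ∈ L

lemma Edits.trans' {V : Type*} {α β γ δ : ℝ≥0∞} {x y z : List V} {c c' : ℝ≥0∞}
    (h : Edits α β γ δ x y c) (h' : Edits α β γ δ y z c') :
    Edits α β γ δ x z (c + c') := by
  induction h with
  | refl w => simpa using h'
  | step s _ ih => rw [add_assoc]; exact Edits.step s (ih h')

lemma Edits.single {V : Type*} {α β γ δ : ℝ≥0∞} {x y : List V} {c : ℝ≥0∞}
    (h : EditStep α β γ δ x y c) : Edits α β γ δ x y c := by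
  simpa using Edits.step h (Edits.refl y)

lemma stepSim {V : Type*} {α β γ δ : ℝ≥0∞} (hmin : min α (min β γ) ≤ δ)
    {y y₂ : List V} {c : ℝ≥0∞} (h : EditStep α β γ δ y y₂ c)
    {z : List V} (hz : z <+: y) :
    ∃ z₂ c', c' ≤ c ∧ Edits α β γ δ z z₂ c' ∧ z₂ <+: y₂ := by
  cases h with
  | subst u v a b =>
    rcases List.prefix_or_prefix_of_prefix hz (List.prefix_append u (a :: v)) with h1 | h1
    · exact ⟨z, 0, zero_le, Edits.refl z, h1.trans (List.prefix_append _ _)⟩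
    · obtain ⟨s, rfl⟩ := h1
      rw [List.prefix_append_right_inj] at hz
      cases s with
      | nil =>
        exact ⟨u ++ [], 0, zero_le, Edits.refl _,
          (List.prefix_append_right_inj u).mpr (List.nil_prefix)⟩
      | cons a' s' =>
        rw [List.cons_prefix_cons] at hz
        obtain ⟨rfl, hs⟩ := hz
        exact ⟨u ++ b :: s', α, le_rfl, Edits.single (EditStep.subst u s' a' b),
          (List.prefix_append_right_inj u).mpr (List.cons_prefix_cons.mpr ⟨rfl, hs⟩)⟩
  | insert u v a =>
    rcases List.prefix_or_prefix_of_prefix hz (List.prefix_append u v) with h1 | h1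
    · exact ⟨z, 0, zero_le, Edits.refl z, h1.trans (List.prefix_append _ _)⟩
    · obtain ⟨s, rfl⟩ := h1
      rw [List.prefix_append_right_inj] at hz
      exact ⟨u ++ a :: s, β, le_rfl, Edits.single (EditStep.insert u s a),
        (List.prefix_append_right_inj u).mpr (List.cons_prefix_cons.mpr ⟨rfl, hz⟩)⟩
  | delete u v a =>
    rcases List.prefix_or_prefix_of_prefix hz (List.prefix_append u (a :: v)) with h1 | h1
    · exact ⟨z, 0, zero_le, Edits.refl z, h1.trans (List.prefix_append _ _)⟩
    · obtain ⟨s, rfl⟩ := h1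
      rw [List.prefix_append_right_inj] at hz
      cases s with
      | nil =>
        exact ⟨u ++ [], 0, zero_le, Edits.refl _,
          (List.prefix_append_right_inj u).mpr (List.nil_prefix)⟩
      | cons a' s' =>
        rw [List.cons_prefix_cons] at hz
        obtain ⟨rfl, hs⟩ := hz
        exact ⟨u ++ s', γ, le_rfl, Edits.single (EditStep.delete u s' a'),
          (List.prefix_append_right_inj u).mpr hs⟩
  | transpose u v a b =>
    rcases List.prefix_or_prefix_of_prefix hz (List.prefix_append u (a :: b :: v)) with h1 | h1
    · exact ⟨z, 0, zero_le, Edits.refl z, h1.trans (List.prefix_append _ _)⟩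
    · obtain ⟨s, rfl⟩ := h1
      rw [List.prefix_append_right_inj] at hz
      cases s with
      | nil =>
        exact ⟨u ++ [], 0, zero_le, Edits.refl _,
          (List.prefix_append_right_inj u).mpr (List.nil_prefix)⟩
      | cons a' s' =>
        rw [List.cons_prefix_cons] at hz
        obtain ⟨rfl, hs⟩ := hz
        cases s' with
        | nil =>
          rcases min_le_iff.mp hmin with hαδ | hβγ
          · exact ⟨u ++ b :: [], α, hαδ, Edits.single (EditStep.subst u [] a' b),
              (List.prefix_append_right_inj u).mpr
                (List.cons_prefix_cons.mpr ⟨rfl, List.nil_prefix⟩)⟩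
          · rcases min_le_iff.mp hβγ with hβδ | hγδ
            · exact ⟨u ++ b :: a' :: [], β, hβδ, Edits.single (EditStep.insert u (a' :: []) b),
                (List.prefix_append_right_inj u).mpr
                  (List.cons_prefix_cons.mpr ⟨rfl,
                    List.cons_prefix_cons.mpr ⟨rfl, List.nil_prefix⟩⟩)⟩
            · exact ⟨u ++ [], γ, hγδ, Edits.single (EditStep.delete u [] a'),
                (List.prefix_append_right_inj u).mpr (List.nil_prefix)⟩
        | cons b' s'' =>
          rw [List.cons_prefix_cons] at hs
          obtain ⟨rfl, hs'⟩ := hs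
          exact ⟨u ++ b' :: a' :: s'', δ, le_rfl, Edits.single (EditStep.transpose u s'' a' b'),
            (List.prefix_append_right_inj u).mpr
              (List.cons_prefix_cons.mpr ⟨rfl, List.cons_prefix_cons.mpr ⟨rfl, hs'⟩⟩)⟩

lemma editsSim {V : Type*} {α β γ δ : ℝ≥0∞} (hmin : min α (min β γ) ≤ δ)
    {y w' : List V} {c : ℝ≥0∞} (h : Edits α β γ δ y w' c) :
    ∀ z, z <+: y → ∃ z' c', c' ≤ c ∧ Edits α β γ δ z z' c' ∧ z' <+: w' := by
  induction h with
  | refl w => exact fun z hz => ⟨z, 0, le_rfl, Edits.refl z, hz⟩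
  | step s t ih =>
    intro z hz
    obtain ⟨z₂, c₁, hc₁, e₁, hp⟩ := stepSim hmin s hz
    obtain ⟨z', c₂, hc₂, e₂, hp'⟩ := ih z₂ hp
    exact ⟨z', c₁ + c₂, add_le_add hc₁ hc₂, e₁.trans' e₂, hp'⟩

lemma editDist_mono_of_prefix {V : Type*} {α β γ δ : ℝ≥0∞} (hmin : min α (min β γ) ≤ δ)
    {S : Set (List V)} (hS : ∀ w' ∈ S, ∀ z : List V, z <+: w' → z ∈ S)
    {w z : List V} (hz : z <+: w) :
    editDist α β γ δ S z ≤ editDist α β γ δ S w := by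
  apply le_sInf
  rintro c ⟨w', hw', he⟩
  obtain ⟨z', c', hc, e, hp⟩ := editsSim hmin he z hz
  exact le_trans (sInf_le ⟨z', hS w' hw' z' hp, e⟩) hc

theorem editDist_contractible {V : Type*} (α β γ δ : ℝ≥0∞)
    (hmin : min α (min β γ) ≤ δ) :
    (∀ (L : Set (List V)) (w : List V) (a : V),
      editDist α β γ δ (pclose L) w ≤ editDist α β γ δ (pclose L) (w ++ [a])) ∧
    (∀ L' : Set (List V), prefixClosed L' → ∀ (w : List V) (a : V),
      editDist 1 1 1 1 L' w ≤ editDist 1 1 1 1 L' (w ++ [a])) := by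
  constructor
  · intro L w a
    apply editDist_mono_of_prefix hmin
    · rintro w' ⟨u, hu⟩ z ⟨r, rfl⟩
      exact ⟨r ++ u, by simpa [List.append_assoc] using hu⟩
    · exact ⟨[a], rfl⟩
  · intro L' hL' w a
    apply editDist_mono_of_prefix (by simp)
    · exact fun w' hw' z hz => hL' w' hw' z hz
    · exact ⟨[a], rfl⟩
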